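/- For complex q, z with |q| < 1 and suitable convergence, Σ_{n≥0} zⁿ q^{2n²+2n} / ((q; q²)_{n+1} (zq; q²)_{n+1}) = Σ_{n≥0} qⁿ / (zq; q²)_{n+1}. -/

import Mathlib

open scoped BigOperators
open Filter Finset

/-- Finite q-Pochhammer symbol `(a; q)_n`. -/
noncomputable def qPoch (a q : ℂ) (n : ℕ) : ℂ :=
  ∏ k ∈ Finset.range n, (1 - a * q ^ k)

/-- Infinite q-Pochhammer symbol `(a; q)_∞`. -/
noncomputable def qPochInf (a q : ℂ) : ℂ :=
  ∏' k : ℕ, (1 - a * q ^ k)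

lemma qPoch_zero (a Q : ℂ) : qPoch a Q 0 = 1 := by simp [qPoch]

lemma qPoch_one (a Q : ℂ) : qPoch a Q 1 = 1 - a := by simp [qPoch]

lemma qPoch_succ (a Q : ℂ) (n : ℕ) :
    qPoch a Q (n + 1) = qPoch a Q n * (1 - a * Q ^ n) :=
  Finset.prod_range_succ _ _

lemma qPoch_succ' (a Q : ℂ) (n : ℕ) :
    qPoch a Q (n + 1) = (1 - a) * qPoch (a * Q) Q n := by
  rw [qPoch, Finset.prod_range_succ', pow_zero, mul_one, mul_comm]
  congr 1
  refine Finset.prod_congr rfl fun k _ => ?_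
  ring

lemma one_sub_ne_of_norm_lt_one {x : ℂ} (h : ‖x‖ < 1) : (1 : ℂ) - x ≠ 0 := by
  intro h0
  rw [sub_eq_zero] at h0
  rw [← h0] at h
  simp at h

lemma weierstrass_aux (f : ℕ → ℝ) (h0 : ∀ k, 0 ≤ f k) (h1 : ∀ k, f k ≤ 1) (n : ℕ) :
    1 - ∑ k ∈ Finset.range n, f k ≤ ∏ k ∈ Finset.range n, (1 - f k) := by
  induction n with
  | zero => simp
  | succ n ih =>
    rw [Finset.sum_range_succ, Finset.prod_range_succ]
    have hfn : 0 ≤ 1 - f n := by linarith [h1 n]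
    have hS : 0 ≤ ∑ k ∈ Finset.range n, f k :=
      Finset.sum_nonneg fun k _ => h0 k
    nlinarith [mul_le_mul_of_nonneg_right ih hfn, h0 n]

lemma exists_lower (q : ℂ) (hq : ‖q‖ < 1) :
    ∃ C : ℝ, 0 < C ∧ ∀ w : ℂ, ‖w‖ ≤ 1 → ∀ n : ℕ, C ≤ ‖qPoch (w * q) (q ^ 2) n‖ := by
  have hr0 : (0 : ℝ) ≤ ‖q‖ := norm_nonneg q
  set t : ℕ → ℝ := fun k => ‖q‖ ^ (2 * k + 1) with ht
  have ht0 : ∀ k, 0 ≤ t k := fun k => pow_nonneg hr0 _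
  have ht1 : ∀ k, t k < 1 := fun k => pow_lt_one₀ hr0 hq (by omega)
  have hsum : Summable t := by
    have h2 : Summable (fun k : ℕ => ‖q‖ * (‖q‖ ^ 2) ^ k) :=
      (summable_geometric_of_lt_one (by positivity) (by nlinarith)).mul_left ‖q‖
    refine h2.congr fun k => ?_
    simp only [ht]
    ring
  obtain ⟨K, hK⟩ : ∃ K, (∑' k, t (k + K)) ≤ 1 / 2 := by
    have := (tendsto_sum_nat_add t).eventually_le_const (by norm_num : (0:ℝ) < 1/2)
    exact this.exists
  set C1 : ℝ := ∏ k ∈ Finset.range K, (1 - t k) with hC1def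
  have hC1 : 0 < C1 :=
    Finset.prod_pos fun k _ => by linarith [ht1 k]
  refine ⟨C1 / 2, by positivity, ?_⟩
  have key : ∀ n, C1 / 2 ≤ ∏ k ∈ Finset.range n, (1 - t k) := by
    intro n
    rcases le_or_gt n K with hnK | hKn
    · obtain ⟨m, rfl⟩ := Nat.exists_eq_add_of_le hnK
      have hsplit : C1 = (∏ k ∈ Finset.range n, (1 - t k)) *
          ∏ k ∈ Finset.range m, (1 - t (n + k)) := by
        rw [hC1def, Finset.prod_range_add]
      have hP : 0 < ∏ k ∈ Finset.range n, (1 - t k) :=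
        Finset.prod_pos fun k _ => by linarith [ht1 k]
      have hQ : (∏ k ∈ Finset.range m, (1 - t (n + k))) ≤ 1 :=
        Finset.prod_le_one (fun k _ => by linarith [ht1 (n + k)])
          (fun k _ => by linarith [ht0 (n + k)])
      nlinarith
    · obtain ⟨m, rfl⟩ := Nat.exists_eq_add_of_le hKn.le
      rw [Finset.prod_range_add]
      have h2 : Summable (fun k => t (k + K)) := (summable_nat_add_iff K).2 hsum
      have hsum_le : ∑ k ∈ Finset.range m, t (K + k) ≤ 1 / 2 := by
        calc ∑ k ∈ Finset.range m, t (K + k) = ∑ k ∈ Finset.range m, t (k + K) := by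
              refine Finset.sum_congr rfl fun k _ => by rw [add_comm]
          _ ≤ ∑' k, t (k + K) := Summable.sum_le_tsum _ (fun k _ => ht0 _) h2
          _ ≤ 1 / 2 := hK
      have hW : 1 - ∑ k ∈ Finset.range m, t (K + k) ≤
          ∏ k ∈ Finset.range m, (1 - t (K + k)) :=
        weierstrass_aux _ (fun k => ht0 _) (fun k => (ht1 _).le) m
      have : (1 : ℝ) / 2 ≤ ∏ k ∈ Finset.range m, (1 - t (K + k)) := by linarith
      nlinarith
  intro w hw n
  have hfac : ∀ k, 1 - t k ≤ ‖1 - w * q * (q ^ 2) ^ k‖ := by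
    intro k
    have hx : ‖w * q * (q ^ 2) ^ k‖ ≤ t k := by
      rw [norm_mul, norm_mul, norm_pow, norm_pow]
      calc ‖w‖ * ‖q‖ * (‖q‖ ^ 2) ^ k ≤ 1 * ‖q‖ * (‖q‖ ^ 2) ^ k := by
            have : (0:ℝ) ≤ ‖q‖ * (‖q‖ ^ 2) ^ k := by positivity
            nlinarith
        _ = t k := by simp only [ht]; ring
    calc 1 - t k ≤ 1 - ‖w * q * (q ^ 2) ^ k‖ := by linarith
      _ = ‖(1:ℂ)‖ - ‖w * q * (q ^ 2) ^ k‖ := by rw [norm_one]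
      _ ≤ ‖1 - w * q * (q ^ 2) ^ k‖ := norm_sub_norm_le _ _
  calc C1 / 2 ≤ ∏ k ∈ Finset.range n, (1 - t k) := key n
    _ ≤ ∏ k ∈ Finset.range n, ‖1 - w * q * (q ^ 2) ^ k‖ :=
        Finset.prod_le_prod (fun k _ => by linarith [ht1 k]) (fun k _ => hfac k)
    _ = ‖qPoch (w * q) (q ^ 2) n‖ := by rw [qPoch, norm_prod]
/-- Numerator bound. -/
lemma norm_num_le {q w : ℂ} (hq : ‖q‖ < 1) (hw : ‖w‖ ≤ 1) {n e : ℕ} (hne : n ≤ e) :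
    ‖w ^ n * q ^ e‖ ≤ ‖q‖ ^ n := by
  rw [norm_mul, norm_pow, norm_pow]
  calc ‖w‖ ^ n * ‖q‖ ^ e ≤ 1 * ‖q‖ ^ e := by
        have h1 : ‖w‖ ^ n ≤ 1 := pow_le_one₀ (norm_nonneg w) hw
        have h2 : (0:ℝ) ≤ ‖q‖ ^ e := pow_nonneg (norm_nonneg q) e
        nlinarith
    _ = ‖q‖ ^ e := one_mul _
    _ ≤ ‖q‖ ^ n := pow_le_pow_of_le_one (norm_nonneg q) hq.le hne

lemma norm_term_le {C : ℝ} (hC0 : 0 < C) {x d1 d2 : ℂ} {e : ℝ} (he : ‖x‖ ≤ e)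
    (h1 : C ≤ ‖d1‖) (h2 : C ≤ ‖d2‖) :
    ‖x / (d1 * d2)‖ ≤ (C * C)⁻¹ * e := by
  rw [norm_div, norm_mul, inv_mul_eq_div]
  have hCC : (0:ℝ) < C * C := by positivity
  exact div_le_div₀ (le_trans (norm_nonneg x) he) he hCC
    (mul_le_mul h1 h2 hC0.le (norm_nonneg d1))

lemma summable_of_geom_bound {q : ℂ} (hq : ‖q‖ < 1) {f : ℕ → ℂ} {B : ℝ}
    (h : ∀ n, ‖f n‖ ≤ B * ‖q‖ ^ n) : Summable f :=
  Summable.of_norm_bounded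
    ((summable_geometric_of_lt_one (norm_nonneg q) hq).mul_left B) h
noncomputable def Ls (q w : ℂ) : ℂ :=
  ∑' n : ℕ, w ^ n * q ^ (2 * n ^ 2 + 2 * n) /
    (qPoch q (q ^ 2) (n + 1) * qPoch (w * q) (q ^ 2) (n + 1))

noncomputable def Rs (q w : ℂ) : ℂ :=
  ∑' n : ℕ, q ^ n / qPoch (w * q) (q ^ 2) (n + 1)

lemma tsum_telescope (c : ℕ → ℂ) (h : Summable fun n => c (n + 1) - c n)
    (h0 : Filter.Tendsto c Filter.atTop (nhds 0)) :
    ∑' n : ℕ, (c (n + 1) - c n) = -c 0 := by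
  refine HasSum.tsum_eq ?_
  rw [h.hasSum_iff_tendsto_nat]
  simpa only [Finset.sum_range_sub c, zero_sub] using h0.sub_const (c 0)

lemma feR {q : ℂ} (hq : ‖q‖ < 1) {C : ℝ} (hC0 : 0 < C)
    (hC : ∀ w : ℂ, ‖w‖ ≤ 1 → ∀ n : ℕ, C ≤ ‖qPoch (w * q) (q ^ 2) n‖)
    {w : ℂ} (hw : ‖w‖ ≤ 1) :
    (1 - w * q) * Rs q w = 1 + q * Rs q (w * q ^ 2) := by
  have hr0 : (0:ℝ) ≤ ‖q‖ := norm_nonneg q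
  have hw2 : ‖w * q ^ 2‖ ≤ 1 := by
    rw [norm_mul, norm_pow]
    have h2 : ‖q‖ ^ 2 ≤ 1 := pow_le_one₀ hr0 hq.le
    nlinarith [norm_nonneg w]
  have hwq : (1 : ℂ) - w * q ≠ 0 := by
    apply one_sub_ne_of_norm_lt_one
    rw [norm_mul]
    nlinarith [norm_nonneg w]
  have hSsh : Summable (fun n : ℕ => q ^ n / qPoch (w * q ^ 2 * q) (q ^ 2) n) := by
    apply summable_of_geom_bound hq (B := C⁻¹)
    intro n
    rw [norm_div, norm_pow, inv_mul_eq_div]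
    exact div_le_div₀ (by positivity) le_rfl hC0 (hC _ hw2 n)
  have hterm : ∀ n : ℕ, (1 - w * q) * (q ^ n / qPoch (w * q) (q ^ 2) (n + 1))
      = q ^ n / qPoch (w * q ^ 2 * q) (q ^ 2) n := by
    intro n
    rw [qPoch_succ', show w * q * q ^ 2 = w * q ^ 2 * q from by ring,
      ← mul_div_assoc, mul_div_mul_left _ _ hwq]
  calc (1 - w * q) * Rs q w
      = ∑' n : ℕ, q ^ n / qPoch (w * q ^ 2 * q) (q ^ 2) n := by
        rw [Rs, ← tsum_mul_left]; exact tsum_congr hterm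
    _ = 1 + q * Rs q (w * q ^ 2) := by
        rw [Summable.tsum_eq_zero_add hSsh]
        congr 1
        · simp [qPoch]
        · rw [Rs, ← tsum_mul_left]
          refine tsum_congr fun n => ?_
          rw [pow_succ', mul_div_assoc]
lemma feL {q : ℂ} (hq : ‖q‖ < 1) {C : ℝ} (hC0 : 0 < C)
    (hC : ∀ w : ℂ, ‖w‖ ≤ 1 → ∀ n : ℕ, C ≤ ‖qPoch (w * q) (q ^ 2) n‖)
    {w : ℂ} (hw : ‖w‖ ≤ 1) :
    (1 - w * q) * Ls q w = 1 + q * Ls q (w * q ^ 2) := by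
  have hr0 : (0:ℝ) ≤ ‖q‖ := norm_nonneg q
  have hw2 : ‖w * q ^ 2‖ ≤ 1 := by
    rw [norm_mul, norm_pow]
    have h2 : ‖q‖ ^ 2 ≤ 1 := pow_le_one₀ hr0 hq.le
    nlinarith [norm_nonneg w]
  have hwq : (1 : ℂ) - w * q ≠ 0 := by
    apply one_sub_ne_of_norm_lt_one
    rw [norm_mul]
    nlinarith [norm_nonneg w]
  have hA : ∀ n : ℕ, C ≤ ‖qPoch q (q ^ 2) n‖ := by
    intro n
    simpa using hC 1 (by norm_num) n
  have hAne : ∀ n, qPoch q (q ^ 2) n ≠ 0 := by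
    intro n h
    have := hA n
    rw [h, norm_zero] at this
    linarith
  have hP : ∀ n : ℕ, C ≤ ‖qPoch (w * q ^ 2 * q) (q ^ 2) n‖ := hC _ hw2
  have hPne : ∀ n, qPoch (w * q ^ 2 * q) (q ^ 2) n ≠ 0 := by
    intro n h
    have := hP n
    rw [h, norm_zero] at this
    linarith
  set u : ℕ → ℂ := fun n => w ^ n * q ^ (2 * n ^ 2 + 2 * n) /
    (qPoch q (q ^ 2) (n + 1) * qPoch (w * q ^ 2 * q) (q ^ 2) n) with hu
  set v : ℕ → ℂ := fun n => w ^ n * q ^ (2 * n ^ 2 + 4 * n + 1) /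
    (qPoch q (q ^ 2) (n + 1) * qPoch (w * q ^ 2 * q) (q ^ 2) (n + 1)) with hv
  set c : ℕ → ℂ := fun n => w ^ n * q ^ (2 * n ^ 2 + 4 * n + 1) /
    (qPoch q (q ^ 2) (n + 1) * qPoch (w * q ^ 2 * q) (q ^ 2) n) with hc
  have hub : ∀ n, ‖u n‖ ≤ (C * C)⁻¹ * ‖q‖ ^ n := fun n =>
    norm_term_le hC0 (norm_num_le hq hw (by nlinarith)) (hA (n + 1)) (hP n)
  have hvb : ∀ n, ‖v n‖ ≤ (C * C)⁻¹ * ‖q‖ ^ n := fun n =>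
    norm_term_le hC0 (norm_num_le hq hw (by nlinarith)) (hA (n + 1)) (hP (n + 1))
  have hcb : ∀ n, ‖c n‖ ≤ (C * C)⁻¹ * ‖q‖ ^ n := fun n =>
    norm_term_le hC0 (norm_num_le hq hw (by nlinarith)) (hA (n + 1)) (hP n)
  have hSu : Summable u := summable_of_geom_bound hq hub
  have hSv : Summable v := summable_of_geom_bound hq hvb
  have hSc : Summable c := summable_of_geom_bound hq hcb
  have hSu' : Summable (fun n => u (n + 1)) := (summable_nat_add_iff 1).2 hSu
  have hkey : ∀ n : ℕ, u (n + 1) - v n = c (n + 1) - c n := by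
    intro n
    have hf1 : (1 : ℂ) - q * (q ^ 2) ^ (n + 1) ≠ 0 := by
      apply one_sub_ne_of_norm_lt_one
      have h := norm_num_le (w := (1:ℂ)) hq (by norm_num)
        (show 1 ≤ 2 * n + 3 by omega)
      rw [show (1:ℂ) ^ 1 * q ^ (2 * n + 3) = q * (q ^ 2) ^ (n + 1) from by ring] at h
      calc ‖q * (q ^ 2) ^ (n + 1)‖ ≤ ‖q‖ ^ 1 := h
        _ < 1 := by rwa [pow_one]
    have hf2 : (1 : ℂ) - w * q ^ 2 * q * (q ^ 2) ^ n ≠ 0 := by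
      apply one_sub_ne_of_norm_lt_one
      have h := norm_num_le (w := w * q ^ 2) hq hw2 (show 1 ≤ 2 * n + 1 by omega)
      rw [show (w * q ^ 2) ^ 1 * q ^ (2 * n + 1) = w * q ^ 2 * q * (q ^ 2) ^ n from by ring] at h
      calc ‖w * q ^ 2 * q * (q ^ 2) ^ n‖ ≤ ‖q‖ ^ 1 := h
        _ < 1 := by rwa [pow_one]
    simp only [hu, hv, hc]
    rw [qPoch_succ q (q ^ 2) (n + 1), qPoch_succ (w * q ^ 2 * q) (q ^ 2) n]
    have hA1 := hAne (n + 1)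
    have hP1 := hPne n
    rw [div_sub_div _ _ (by simp [*]) (by simp [*]), div_sub_div _ _ (by simp [*]) (by simp [*]),
      div_eq_div_iff (by simp [*]) (by simp [*])]
    ring
  have hstepA : (1 - w * q) * Ls q w = ∑' n, u n := by
    rw [Ls, ← tsum_mul_left]
    refine tsum_congr fun n => ?_
    rw [qPoch_succ' (w * q) (q ^ 2) n, show w * q * q ^ 2 = w * q ^ 2 * q from by ring,
      mul_left_comm (qPoch q (q ^ 2) (n + 1)) (1 - w * q), ← mul_div_assoc,
      mul_div_mul_left _ _ hwq]
  have hstepB : q * Ls q (w * q ^ 2) = ∑' n, v n := by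
    rw [Ls, ← tsum_mul_left]
    refine tsum_congr fun n => ?_
    rw [← mul_div_assoc]
    congr 1
    ring
  have htel : ∑' n : ℕ, (c (n + 1) - c n) = -c 0 := by
    refine tsum_telescope c (((summable_nat_add_iff 1).2 hSc).sub hSc) ?_
    refine squeeze_zero_norm hcb ?_
    simpa using (tendsto_pow_atTop_nhds_zero_of_lt_one hr0 hq).const_mul (C * C)⁻¹
  have hmain : (1 - w * q) * Ls q w - q * Ls q (w * q ^ 2) = 1 := by
    rw [hstepA, hstepB, Summable.tsum_eq_zero_add hSu, add_sub_assoc, ← Summable.tsum_sub hSu' hSv,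
      (tsum_congr hkey).trans htel]
    have h1q : (1 : ℂ) - q ≠ 0 := one_sub_ne_of_norm_lt_one hq
    simp only [hu, hc]
    norm_num [qPoch_one, qPoch_zero]
    field_simp
    ring
  linear_combination hmain
theorem omega_spec_2_10 (q z : ℂ) (hq : ‖q‖ < 1) (hz : ‖z‖ ≤ 1)
    (hden : ∀ k : ℕ, 1 - z * q ^ (2 * k + 1) ≠ 0) :
    ∑' n : ℕ, z ^ n * q ^ (2 * n ^ 2 + 2 * n) /
        (qPoch q (q ^ 2) (n + 1) * qPoch (z * q) (q ^ 2) (n + 1))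
      = ∑' n : ℕ, q ^ n / qPoch (z * q) (q ^ 2) (n + 1) := by
  obtain ⟨C, hC0, hC⟩ := exists_lower q hq
  have hr0 : (0:ℝ) ≤ ‖q‖ := norm_nonneg q
  have h1r : (0:ℝ) < 1 - ‖q‖ := by linarith
  set M : ℝ := ((C * C)⁻¹ + C⁻¹) * (1 - ‖q‖)⁻¹ with hM
  have hA : ∀ n : ℕ, C ≤ ‖qPoch q (q ^ 2) n‖ := by
    intro n; simpa using hC 1 (by norm_num) n
  have hDb : ∀ w : ℂ, ‖w‖ ≤ 1 → ‖Ls q w - Rs q w‖ ≤ M := by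
    intro w hw
    have hLb : ‖Ls q w‖ ≤ (C * C)⁻¹ * (1 - ‖q‖)⁻¹ := by
      rw [Ls]
      refine tsum_of_norm_bounded ((hasSum_geometric_of_lt_one hr0 hq).mul_left _)
        fun n => norm_term_le hC0 (norm_num_le hq hw (by nlinarith)) (hA (n + 1)) (hC w hw (n + 1))
    have hRb : ‖Rs q w‖ ≤ C⁻¹ * (1 - ‖q‖)⁻¹ := by
      rw [Rs]
      refine tsum_of_norm_bounded ((hasSum_geometric_of_lt_one hr0 hq).mul_left _)
        fun n => ?_
      rw [norm_div, norm_pow, inv_mul_eq_div]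
      exact div_le_div₀ (by positivity) le_rfl hC0 (hC w hw (n + 1))
    calc ‖Ls q w - Rs q w‖ ≤ ‖Ls q w‖ + ‖Rs q w‖ := norm_sub_le _ _
      _ ≤ M := by rw [hM, add_mul]; linarith
  have hstep : ∀ w : ℂ, ‖w‖ ≤ 1 →
      (1 - w * q) * (Ls q w - Rs q w) = q * (Ls q (w * q ^ 2) - Rs q (w * q ^ 2)) := by
    intro w hw
    have h1 := feL hq hC0 hC hw
    have h2 := feR hq hC0 hC hw
    linear_combination h1 - h2
  have hwN : ∀ N : ℕ, ‖z * q ^ (2 * N)‖ ≤ 1 := by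
    intro N
    rw [norm_mul, norm_pow]
    have h2 : ‖q‖ ^ (2 * N) ≤ 1 := pow_le_one₀ hr0 hq.le
    nlinarith [norm_nonneg z]
  have hiter : ∀ N : ℕ, qPoch (z * q) (q ^ 2) N * (Ls q z - Rs q z)
      = q ^ N * (Ls q (z * q ^ (2 * N)) - Rs q (z * q ^ (2 * N))) := by
    intro N
    induction N with
    | zero => simp [qPoch]
    | succ N ih =>
      calc qPoch (z * q) (q ^ 2) (N + 1) * (Ls q z - Rs q z)
          = (1 - z * q ^ (2 * N) * q) * (qPoch (z * q) (q ^ 2) N * (Ls q z - Rs q z)) := by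
            rw [qPoch_succ]; ring
        _ = (1 - z * q ^ (2 * N) * q) * (q ^ N * (Ls q (z * q ^ (2 * N)) - Rs q (z * q ^ (2 * N)))) := by
            rw [ih]
        _ = q ^ N * ((1 - z * q ^ (2 * N) * q) * (Ls q (z * q ^ (2 * N)) - Rs q (z * q ^ (2 * N)))) := by
            ring
        _ = q ^ N * (q * (Ls q (z * q ^ (2 * N) * q ^ 2) - Rs q (z * q ^ (2 * N) * q ^ 2))) := by
            rw [hstep _ (hwN N)]
        _ = q ^ (N + 1) * (Ls q (z * q ^ (2 * (N + 1))) - Rs q (z * q ^ (2 * (N + 1)))) := by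
            rw [show z * q ^ (2 * N) * q ^ 2 = z * q ^ (2 * (N + 1)) from by ring]; ring
  have hb : ∀ N : ℕ, C * ‖Ls q z - Rs q z‖ ≤ ‖q‖ ^ N * M := by
    intro N
    calc C * ‖Ls q z - Rs q z‖
        ≤ ‖qPoch (z * q) (q ^ 2) N‖ * ‖Ls q z - Rs q z‖ :=
          mul_le_mul_of_nonneg_right (hC z hz N) (norm_nonneg _)
      _ = ‖qPoch (z * q) (q ^ 2) N * (Ls q z - Rs q z)‖ := (norm_mul _ _).symm
      _ = ‖q ^ N * (Ls q (z * q ^ (2 * N)) - Rs q (z * q ^ (2 * N)))‖ := by rw [hiter N]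
      _ = ‖q‖ ^ N * ‖Ls q (z * q ^ (2 * N)) - Rs q (z * q ^ (2 * N))‖ := by
          rw [norm_mul, norm_pow]
      _ ≤ ‖q‖ ^ N * M := mul_le_mul_of_nonneg_left (hDb _ (hwN N)) (pow_nonneg hr0 N)
  have hlim : Filter.Tendsto (fun N : ℕ => ‖q‖ ^ N * M) Filter.atTop (nhds 0) := by
    simpa using (tendsto_pow_atTop_nhds_zero_of_lt_one hr0 hq).mul_const M
  have hle : C * ‖Ls q z - Rs q z‖ ≤ 0 :=
    le_of_tendsto_of_tendsto' tendsto_const_nhds hlim hb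
  have hnorm : ‖Ls q z - Rs q z‖ ≤ 0 := by
    nlinarith [norm_nonneg (Ls q z - Rs q z)]
  have hzero : Ls q z - Rs q z = 0 := norm_le_zero_iff.mp hnorm
  have hfin : Ls q z = Rs q z := sub_eq_zero.mp hzero
  exact hfin
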